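/- For θ > 0, the function θ ↦ exp((e^θ − θ − 1)σ² − θt) attains its minimum over θ > 0 at θ* = log(1 + t/σ²), and its value there is at most exp(−(t²/2)/(σ² + t/3)). -/

import Mathlib

private lemma hasDerivAt_p (x : ℝ) (hx : 0 < x) :
    HasDerivAt (fun x : ℝ => Real.log (1+x) - 3*(x^2+6*x)/(2*(x+3)^2))
      (1/(1+x) - 27/(x+3)^3) x := by
  have h1 : HasDerivAt (fun x : ℝ => 1 + x) 1 x := by
    simpa using (hasDerivAt_id x).const_add 1
  have hlog : HasDerivAt (fun x : ℝ => Real.log (1+x)) (1/(1+x)) x := by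
    simpa using h1.log (by nlinarith)
  have hN : HasDerivAt (fun x : ℝ => 3*(x^2+6*x)) (3*(2*x+6)) x := by
    have h : HasDerivAt (fun x : ℝ => x^2+6*x) (2*x+6) x := by
      have := (hasDerivAt_pow 2 x).add ((hasDerivAt_id x).const_mul 6)
      simpa [mul_comm, Pi.add_def] using this
    simpa using h.const_mul 3
  have hD : HasDerivAt (fun x : ℝ => 2*(x+3)^2) (2*(2*(x+3))) x := by
    have h0 : HasDerivAt (fun x : ℝ => x + 3) 1 x := by
      simpa using (hasDerivAt_id x).add_const 3
    have := (h0.pow 2).const_mul 2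
    simpa [mul_comm, mul_assoc] using this
  have hq := hN.div hD (by positivity)
  have := hlog.sub hq
  refine this.congr_deriv ?_
  have h3 : x + 3 ≠ 0 := by positivity
  have h1' : 1 + x ≠ 0 := by positivity
  field_simp
  ring

private lemma hasDerivAt_g (x : ℝ) (hx : 0 < x) :
    HasDerivAt (fun x : ℝ => (1+x) * Real.log (1+x) - x - 3*x^2/(2*(x+3)))
      (Real.log (1+x) - 3*(x^2+6*x)/(2*(x+3)^2)) x := by
  have h1 : HasDerivAt (fun x : ℝ => 1 + x) 1 x := by
    simpa using (hasDerivAt_id x).const_add 1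
  have hlog : HasDerivAt (fun x : ℝ => Real.log (1+x)) (1/(1+x)) x := by
    simpa using h1.log (by nlinarith)
  have hmul := h1.mul hlog
  have hN : HasDerivAt (fun x : ℝ => 3*x^2) (3*(2*x)) x := by
    simpa [mul_comm, mul_assoc] using (hasDerivAt_pow 2 x).const_mul 3
  have hD : HasDerivAt (fun x : ℝ => 2*(x+3)) 2 x := by
    have h0 : HasDerivAt (fun x : ℝ => x + 3) 1 x := by
      simpa using (hasDerivAt_id x).add_const 3
    simpa using h0.const_mul 2
  have hq := hN.div hD (by positivity)
  have := (hmul.sub (hasDerivAt_id x)).sub hq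
  refine this.congr_deriv ?_
  have h3 : x + 3 ≠ 0 := by positivity
  have h1' : 1 + x ≠ 0 := by positivity
  field_simp
  ring

private lemma key_ineq {x : ℝ} (hx : 0 < x) :
    3*x^2/(2*(x+3)) ≤ (1+x) * Real.log (1+x) - x := by
  set p : ℝ → ℝ := fun x => Real.log (1+x) - 3*(x^2+6*x)/(2*(x+3)^2) with hp
  -- p ≥ 0 on Ici 0
  have hpmono : MonotoneOn p (Set.Ici (0:ℝ)) := by
    apply monotoneOn_of_deriv_nonneg (convex_Ici 0)
    · apply ContinuousOn.sub
      · apply ContinuousOn.log (by fun_prop)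
        intro y hy; simp only [Set.mem_Ici] at hy; nlinarith
      · apply ContinuousOn.div (by fun_prop) (by fun_prop)
        intro y hy; simp only [Set.mem_Ici] at hy; positivity
    · intro y hy
      rw [interior_Ici] at hy
      exact (hasDerivAt_p y hy).differentiableAt.differentiableWithinAt
    · intro y hy
      rw [interior_Ici] at hy
      rw [(hasDerivAt_p y hy).deriv]
      have hy' : (0:ℝ) < y := Set.mem_Ioi.mp hy
      have h3 : (0:ℝ) < y + 3 := by linarith
      have h1 : (0:ℝ) < 1 + y := by linarith
      rw [sub_nonneg, div_le_div_iff₀ (by positivity) (by positivity)]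
      nlinarith [sq_nonneg y, pow_pos h3 3]
  have hp0 : p 0 = 0 := by simp [hp]
  have hpx : ∀ y : ℝ, 0 ≤ y → 0 ≤ p y := fun y hy => by
    have := hpmono (Set.self_mem_Ici) (Set.mem_Ici.mpr hy) hy
    rwa [hp0] at this
  set g : ℝ → ℝ := fun x => (1+x) * Real.log (1+x) - x - 3*x^2/(2*(x+3)) with hg
  have hgmono : MonotoneOn g (Set.Ici (0:ℝ)) := by
    apply monotoneOn_of_deriv_nonneg (convex_Ici 0)
    · apply ContinuousOn.sub
      · apply ContinuousOn.sub
        · apply ContinuousOn.mul (by fun_prop)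
          apply ContinuousOn.log (by fun_prop)
          intro y hy; simp only [Set.mem_Ici] at hy; nlinarith
        · fun_prop
      · apply ContinuousOn.div (by fun_prop) (by fun_prop)
        intro y hy; simp only [Set.mem_Ici] at hy; positivity
    · intro y hy
      rw [interior_Ici] at hy
      exact (hasDerivAt_g y hy).differentiableAt.differentiableWithinAt
    · intro y hy
      rw [interior_Ici] at hy
      rw [(hasDerivAt_g y hy).deriv]
      exact hpx y hy.le
  have hg0 : g 0 = 0 := by simp [hg]
  have := hgmono (Set.self_mem_Ici) (Set.mem_Ici.mpr hx.le) hx.le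
  rw [hg0] at this
  simp only [hg] at this
  linarith

theorem mgf_min_bound (σ t : ℝ) (hσ : 0 < σ) (ht : 0 < t) :
    IsMinOn (fun θ : ℝ => Real.exp ((Real.exp θ - θ - 1) * σ ^ 2 - θ * t))
      (Set.Ioi (0 : ℝ)) (Real.log (1 + t / σ ^ 2)) ∧
    Real.exp ((Real.exp (Real.log (1 + t / σ ^ 2)) - Real.log (1 + t / σ ^ 2) - 1) * σ ^ 2
        - Real.log (1 + t / σ ^ 2) * t)
      ≤ Real.exp (-(t ^ 2 / 2) / (σ ^ 2 + t / 3)) := by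
  have hs : (0:ℝ) < σ ^ 2 := by positivity
  set s := σ ^ 2 with hsdef
  set A := 1 + t / s with hA
  have hA1 : 1 < A := by
    rw [hA]; nlinarith [div_pos ht hs]
  have hexplog : Real.exp (Real.log A) = A := Real.exp_log (by linarith)
  have hsA : s * A = s + t := by
    rw [hA]; field_simp
  constructor
  · intro θ hθ
    simp only [Set.mem_setOf_eq]
    apply Real.exp_le_exp.mpr
    rw [hexplog]
    set u := θ - Real.log A with hu
    have hAne : A ≠ 0 := by linarith
    have hexpθ : Real.exp θ = A * Real.exp u := by
      rw [hu, Real.exp_sub, hexplog]; field_simp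
    have h1 : u + 1 ≤ Real.exp u := Real.add_one_le_exp u
    have hnn : 0 ≤ s * A * (Real.exp u - 1 - u) :=
      mul_nonneg (mul_pos hs (by linarith : (0:ℝ) < A)).le (by linarith)
    rw [hexpθ]
    have hθeq : θ = Real.log A + u := by rw [hu]; ring
    rw [hθeq]
    have hdiff : (A * Real.exp u - (Real.log A + u) - 1) * s - (Real.log A + u) * t
        = (A - Real.log A - 1) * s - Real.log A * t + s * A * (Real.exp u - 1 - u) := by
      linear_combination u * hsA
    linarith [hexplog]
  · apply Real.exp_le_exp.mpr
    rw [hexplog]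
    set L := Real.log A with hL
    have hx : (0:ℝ) < t / s := div_pos ht hs
    have hkey := key_ineq hx
    rw [← hA] at hkey
    -- hkey : 3*(t/s)^2/(2*(t/s+3)) ≤ A * L - t/s
    have e1 : (1 + t/s) * L - t/s = ((s+t)*L - t)/s := by field_simp; try ring
    have e2 : 3*(t/s)^2/(2*(t/s+3)) = (t^2/2)/(s+t/3)/s := by
      rw [div_div]
      rw [div_eq_div_iff (by positivity) (by positivity)]
      field_simp
      ring
    rw [e1, e2, div_le_div_iff_of_pos_right hs] at hkey
    have : (A - L - 1) * s - L * t = t - ((s+t)*L - t) - t := by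
      rw [hA]; field_simp; try ring
    rw [this]
    have hpos : (0:ℝ) < s + t/3 := by linarith
    rw [neg_div, le_neg]
    have h3 : t ^ 2 / 2 / (s + t / 3) ≤ (s+t)*L - t := hkey
    linarith
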